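/- arXiv:1910.02645 — 5 statements merged into one kernel-verified Lean document; each statement's English description precedes it below -/
import Mathlib

section
/- Let α > 1, c ∈ ℝ, and f ∈ 𝒮(ℝ²) with (∂^k f/∂x^k)(c,y) = 0 for k = 0,…,m where m ≥ α - 2. Define F_α(ξ, η) = f(sgn(ξ)|ξ|^{1/α} + c, η)/(α|ξ|^{(α-1)/α}) for ξ ≠ 0. Then for every N > 0 there exists C_N > 0 such that |F_α(ξ, η)| ≤ C_N (1 + |ξ| + |η|)^{-N} for all ξ ≠ 0 and η ∈ ℝ. -/
-- decay lemma
lemma schwartz_one_add_decay (h : SchwartzMap (ℝ × ℝ) ℝ) (k : ℕ) :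
    ∃ D : ℝ, 0 < D ∧ ∀ p : ℝ × ℝ, (1 + ‖p‖) ^ (k : ℝ) * ‖h p‖ ≤ D := by
  refine ⟨2 ^ k * (Finset.Iic (k, 0)).sup (fun m => SchwartzMap.seminorm ℝ m.1 m.2) h + 1,
    by positivity, fun p => ?_⟩
  have := SchwartzMap.one_add_le_sup_seminorm_apply (𝕜 := ℝ) (m := (k, 0)) (k := k) (n := 0)
    le_rfl le_rfl h p
  rw [norm_iteratedFDeriv_zero] at this
  rw [Real.rpow_natCast]
  linarith

-- partial derivative iteration
lemma partial_iter (f : SchwartzMap (ℝ × ℝ) ℝ) :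
    ∀ (n : ℕ) (y t : ℝ), iteratedDeriv n (fun x : ℝ => f (x, y)) t
      = ((LineDeriv.lineDerivOpCLM ℝ (SchwartzMap (ℝ × ℝ) ℝ) ((1 : ℝ), (0 : ℝ)))^[n] f) (t, y) := by
  intro n
  induction n generalizing f with
  | zero => simp
  | succ n ih =>
    intro y t
    have hderiv : (deriv fun x : ℝ => f (x, y))
        = fun x : ℝ => (LineDeriv.lineDerivOpCLM ℝ (SchwartzMap (ℝ × ℝ) ℝ) ((1 : ℝ), (0 : ℝ)) f) (x, y) := by
      funext s
      have h1 : HasDerivAt (fun x : ℝ => ((x, y) : ℝ × ℝ)) ((1 : ℝ), (0 : ℝ)) s :=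
        (hasDerivAt_id s).prodMk (hasDerivAt_const s y)
      have h2 : HasFDerivAt (⇑f) (fderiv ℝ f (s, y)) (s, y) :=
        (f.smooth 1).differentiable (by norm_num) |>.differentiableAt.hasFDerivAt
      have h3 : HasDerivAt (fun x : ℝ => f (x, y)) (fderiv ℝ f (s, y) ((1 : ℝ), (0 : ℝ))) s :=
        h2.comp_hasDerivAt s h1
      rw [h3.deriv, LineDeriv.lineDerivOpCLM_apply, SchwartzMap.lineDerivOp_apply_eq_fderiv]
    rw [iteratedDeriv_succ', hderiv, ih, Function.iterate_succ_apply]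


lemma vanish_bound : ∀ (m : ℕ) (φ : ℝ → ℝ), ContDiff ℝ (⊤ : ℕ∞) φ → ∀ (c : ℝ),
    (∀ k ≤ m, iteratedDeriv k φ c = 0) → ∀ (M : ℝ),
    (∀ t : ℝ, |iteratedDeriv (m + 1) φ t| ≤ M) → ∀ x : ℝ, |φ (c + x)| ≤ M * |x| ^ (m + 1) := by
  intro m
  induction m with
  | zero =>
    intro φ hφ c h0 M hM x
    have hc : φ c = 0 := by simpa using h0 0 le_rfl
    have hb : ∀ s ∈ Metric.closedBall c |x|, ‖deriv φ s‖ ≤ M := by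
      intro s _
      simpa [iteratedDeriv_one] using hM s
    have hdif : ∀ s ∈ Metric.closedBall c |x|, DifferentiableAt ℝ φ s := fun s _ =>
      (hφ.differentiable (by simp)).differentiableAt
    have hmem : c + x ∈ Metric.closedBall c |x| := by
      simp [Metric.mem_closedBall, dist_eq_norm]
    have := (convex_closedBall c |x|).norm_image_sub_le_of_norm_deriv_le hdif hb
      (Metric.mem_closedBall_self (abs_nonneg x)) hmem
    calc |φ (c + x)| = ‖φ (c + x) - φ c‖ := by rw [hc]; simp
      _ ≤ M * ‖c + x - c‖ := this
      _ = M * |x| ^ (0 + 1) := by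
          rw [show c + x - c = x by ring, Real.norm_eq_abs, pow_one]
  | succ m ih =>
    intro φ hφ c h0 M hM x
    have hφ' : ContDiff ℝ (⊤ : ℕ∞) (deriv φ) := (contDiff_infty_iff_deriv.mp hφ).2
    have h0' : ∀ k ≤ m, iteratedDeriv k (deriv φ) c = 0 := by
      intro k hk
      have : iteratedDeriv (k + 1) φ c = 0 := h0 (k + 1) (by omega)
      rwa [iteratedDeriv_succ'] at this
    have hM' : ∀ t : ℝ, |iteratedDeriv (m + 1) (deriv φ) t| ≤ M := by
      intro t
      have := hM t
      rwa [iteratedDeriv_succ'] at this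
    have hd := ih (deriv φ) hφ' c h0' M hM'
    have hc : φ c = 0 := h0 0 (by omega)
    have hb : ∀ s ∈ Metric.closedBall c |x|, ‖deriv φ s‖ ≤ M * |x| ^ (m + 1) := by
      intro s hs
      have h1 : |deriv φ (c + (s - c))| ≤ M * |s - c| ^ (m + 1) := hd (s - c)
      have h2 : |s - c| ≤ |x| := by
        simpa [Metric.mem_closedBall, dist_eq_norm] using hs
      have hM0 : 0 ≤ M := le_trans (abs_nonneg _) (hM c)
      calc ‖deriv φ s‖ = |deriv φ (c + (s - c))| := by
              rw [Real.norm_eq_abs, show c + (s - c) = s by ring]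
        _ ≤ M * |s - c| ^ (m + 1) := h1
        _ ≤ M * |x| ^ (m + 1) := by
            gcongr
    have hdif : ∀ s ∈ Metric.closedBall c |x|, DifferentiableAt ℝ φ s := fun s _ =>
      (hφ.differentiable (by simp)).differentiableAt
    have hmem : c + x ∈ Metric.closedBall c |x| := by
      simp [Metric.mem_closedBall, dist_eq_norm]
    have := (convex_closedBall c |x|).norm_image_sub_le_of_norm_deriv_le hdif hb
      (Metric.mem_closedBall_self (abs_nonneg x)) hmem
    calc |φ (c + x)| = ‖φ (c + x) - φ c‖ := by rw [hc]; simp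
      _ ≤ M * |x| ^ (m + 1) * ‖c + x - c‖ := this
      _ = M * |x| ^ (m + 1 + 1) := by
          rw [show c + x - c = x by ring, Real.norm_eq_abs]; ring

set_option maxHeartbeats 2000000 in
/-- Rapid decay of `F_α`. -/
theorem Falpha_decay (α c : ℝ) (hα : 1 < α) (m : ℕ) (hm : (m : ℝ) ≥ α - 2)
    (f : SchwartzMap (ℝ × ℝ) ℝ)
    (hvan : ∀ k ≤ m, ∀ y : ℝ, iteratedDeriv k (fun x : ℝ => f (x, y)) c = 0)
    (F : ℝ → ℝ → ℝ)
    (hF : ∀ ξ : ℝ, ξ ≠ 0 → ∀ η : ℝ,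
      F ξ η = f (Real.sign ξ * |ξ| ^ (1 / α) + c, η) / (α * |ξ| ^ ((α - 1) / α))) :
    ∀ N : ℝ, 0 < N → ∃ C : ℝ, 0 < C ∧
      ∀ ξ : ℝ, ξ ≠ 0 → ∀ η : ℝ, |F ξ η| ≤ C * (1 + |ξ| + |η|) ^ (-N) := by
  intro N hN
  have hα0 : 0 < α := by linarith
  obtain ⟨K, hKge⟩ : ∃ K : ℕ, α * N ≤ (K : ℝ) := ⟨⌈α * N⌉₊, Nat.le_ceil _⟩
  obtain ⟨D₁, hD₁pos, hD₁⟩ := schwartz_one_add_decay f K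
  obtain ⟨g, hgdef⟩ : ∃ g : SchwartzMap (ℝ × ℝ) ℝ,
      g = (LineDeriv.lineDerivOpCLM ℝ (SchwartzMap (ℝ × ℝ) ℝ) ((1 : ℝ), (0 : ℝ)))^[m + 1] f := ⟨_, rfl⟩
  obtain ⟨D₂, hD₂pos, hD₂⟩ := schwartz_one_add_decay g K
  obtain ⟨C₀, hC₀def⟩ : ∃ C₀ : ℝ,
      C₀ = max ((2 * (1 + |c|)) ^ (K : ℝ) * D₁) (2 ^ (K : ℝ) * D₂) := ⟨_, rfl⟩
  have hC₀pos : 0 < C₀ := by rw [hC₀def]; exact lt_max_of_lt_left (by positivity)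
  refine ⟨3 ^ N * C₀, by positivity, ?_⟩
  intro ξ hξ η
  obtain ⟨u, hudef⟩ : ∃ u : ℝ, u = |ξ| ^ (1 / α) := ⟨_, rfl⟩
  obtain ⟨v, hvdef⟩ : ∃ v : ℝ, v = |η| := ⟨_, rfl⟩
  have hξpos : 0 < |ξ| := abs_pos.mpr hξ
  have hu0 : 0 < u := hudef ▸ Real.rpow_pos_of_pos hξpos _
  have hv0 : 0 ≤ v := hvdef ▸ abs_nonneg η
  obtain ⟨B, hBdef⟩ : ∃ B : ℝ, B = 1 + u + v := ⟨_, rfl⟩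
  obtain ⟨A, hAdef⟩ : ∃ A : ℝ, A = 1 + |ξ| + |η| := ⟨_, rfl⟩
  have hB1 : 1 ≤ B := by rw [hBdef]; linarith
  have hA1 : 1 ≤ A := by rw [hAdef]; linarith [abs_nonneg ξ, abs_nonneg η]
  obtain ⟨x, hxdef⟩ : ∃ x : ℝ, x = Real.sign ξ * u := ⟨_, rfl⟩
  have hsgn : |x| = u := by
    rw [hxdef]
    rcases lt_or_gt_of_ne hξ with h | h
    · rw [Real.sign_of_neg h, abs_mul]; simp [abs_of_pos hu0]
    · rw [Real.sign_of_pos h, abs_mul]; simp [abs_of_pos hu0]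
  obtain ⟨p, hpdef⟩ : ∃ p : ℝ × ℝ, p = (x + c, η) := ⟨_, rfl⟩
  have hden : |ξ| ^ ((α - 1) / α) = u ^ (α - 1) := by
    rw [hudef, ← Real.rpow_mul (abs_nonneg ξ)]
    congr 1
    field_simp
  have hFval : F ξ η = f p / (α * u ^ (α - 1)) := by
    rw [hF ξ hξ η, hden, hpdef, hxdef, hudef]
  have hrapos : 0 < u ^ (α - 1) := Real.rpow_pos_of_pos hu0 _
  have hden_pos : 0 < α * u ^ (α - 1) := by positivity
  have hFabs : |F ξ η| = |f p| / (α * u ^ (α - 1)) := by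
    rw [hFval, abs_div, abs_of_pos hden_pos]
  have hKc : (0:ℝ) ≤ (K : ℝ) := Nat.cast_nonneg K
  have hclaim : |F ξ η| * B ^ (K : ℝ) ≤ C₀ := by
    have hBpos : (0:ℝ) < B := lt_of_lt_of_le one_pos hB1
    rcases le_total 1 u with hu1 | hu1
    · -- case 1 ≤ u
      have h1 : 1 ≤ α * u ^ (α - 1) := by
        have := Real.one_le_rpow hu1 (by linarith : (0:ℝ) ≤ α - 1)
        nlinarith
      have hFle : |F ξ η| ≤ |f p| := by
        rw [hFabs]; exact div_le_self (abs_nonneg _) h1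
      have hn1 : |x + c| ≤ ‖p‖ := by
        rw [hpdef]; simpa using norm_fst_le ((x + c, η) : ℝ × ℝ)
      have hn2 : v ≤ ‖p‖ := by
        rw [hpdef, hvdef]; simpa using norm_snd_le ((x + c, η) : ℝ × ℝ)
      have hux : u ≤ ‖p‖ + |c| := by
        have h2 : |x| ≤ |x + c| + |c| := by
          calc |x| = |(x + c) + (-c)| := by ring_nf
            _ ≤ |x + c| + |(-c)| := abs_add_le _ _
            _ = |x + c| + |c| := by rw [abs_neg]
        rw [← hsgn]; linarith
      have hB2 : B ≤ 2 * (1 + |c|) * (1 + ‖p‖) := by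
        rw [hBdef]
        nlinarith [norm_nonneg p, abs_nonneg c]
      have hBK : B ^ (K : ℝ) ≤ (2 * (1 + |c|)) ^ (K : ℝ) * (1 + ‖p‖) ^ (K : ℝ) := by
        calc B ^ (K : ℝ) ≤ (2 * (1 + |c|) * (1 + ‖p‖)) ^ (K : ℝ) :=
              Real.rpow_le_rpow (by linarith) hB2 hKc
          _ = _ := Real.mul_rpow (by positivity) (by positivity)
      calc |F ξ η| * B ^ (K : ℝ)
          ≤ |f p| * ((2 * (1 + |c|)) ^ (K : ℝ) * (1 + ‖p‖) ^ (K : ℝ)) := by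
            apply mul_le_mul hFle hBK (by positivity) (abs_nonneg _)
        _ = (2 * (1 + |c|)) ^ (K : ℝ) * ((1 + ‖p‖) ^ (K : ℝ) * |f p|) := by ring
        _ ≤ (2 * (1 + |c|)) ^ (K : ℝ) * D₁ := by
            have h3 := hD₁ p
            rw [Real.norm_eq_abs] at h3
            exact mul_le_mul_of_nonneg_left h3 (by positivity)
        _ ≤ C₀ := hC₀def ▸ le_max_left _ _
    · -- case u ≤ 1
      obtain ⟨M, hMdef⟩ : ∃ M : ℝ, M = D₂ / (1 + v) ^ (K : ℝ) := ⟨_, rfl⟩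
      have hv1 : (0:ℝ) < (1 + v) ^ (K : ℝ) := Real.rpow_pos_of_pos (by linarith) _
      have hM0 : 0 ≤ M := by rw [hMdef]; positivity
      have hM : ∀ t : ℝ, |iteratedDeriv (m + 1) (fun x : ℝ => f (x, η)) t| ≤ M := by
        intro t
        rw [partial_iter f (m + 1) η t, ← hgdef]
        have h2 := hD₂ (t, η)
        have hvn : v ≤ ‖((t, η) : ℝ × ℝ)‖ := by
          rw [hvdef]; simpa using norm_snd_le ((t, η) : ℝ × ℝ)
        have hpow : (1 + v) ^ (K : ℝ) ≤ (1 + ‖((t, η) : ℝ × ℝ)‖) ^ (K : ℝ) :=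
          Real.rpow_le_rpow (by linarith) (by linarith) hKc
        rw [hMdef, le_div_iff₀ hv1]
        calc |g (t, η)| * (1 + v) ^ (K : ℝ)
            ≤ |g (t, η)| * (1 + ‖((t, η) : ℝ × ℝ)‖) ^ (K : ℝ) :=
              mul_le_mul_of_nonneg_left hpow (abs_nonneg _)
          _ = (1 + ‖((t, η) : ℝ × ℝ)‖) ^ (K : ℝ) * ‖g (t, η)‖ := by
              rw [Real.norm_eq_abs]; ring
          _ ≤ D₂ := h2
      have hsmooth : ContDiff ℝ (⊤ : ℕ∞) (fun x : ℝ => f (x, η)) :=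
        (f.smooth ⊤).comp (contDiff_id.prodMk contDiff_const)
      have hvan' : ∀ k ≤ m, iteratedDeriv k (fun x : ℝ => f (x, η)) c = 0 :=
        fun k hk => hvan k hk η
      have htaylor := vanish_bound m _ hsmooth c hvan' M hM x
      have hfp : |f p| ≤ M * u ^ (m + 1) := by
        have he : f p = (fun x : ℝ => f (x, η)) (c + x) := by
          rw [hpdef]; simp [add_comm]
        rw [he]
        calc |(fun x : ℝ => f (x, η)) (c + x)| ≤ M * |x| ^ (m + 1) := htaylor
          _ = M * u ^ (m + 1) := by rw [hsgn]
      have hnp : u ^ (m + 1) = u ^ ((m : ℝ) + 1) := by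
        rw [← Real.rpow_natCast u (m + 1)]
        push_cast
        ring_nf
      have humono : u ^ ((m : ℝ) + 1) ≤ u ^ (α - 1) :=
        Real.rpow_le_rpow_of_exponent_ge hu0 hu1 (by linarith)
      have hFle : |F ξ η| ≤ M := by
        rw [hFabs, div_le_iff₀ hden_pos]
        calc |f p| ≤ M * u ^ (m + 1) := hfp
          _ = M * u ^ ((m : ℝ) + 1) := by rw [hnp]
          _ ≤ M * u ^ (α - 1) := mul_le_mul_of_nonneg_left humono hM0
          _ ≤ M * (α * u ^ (α - 1)) := by nlinarith [mul_nonneg (mul_nonneg hM0 hrapos.le) (show (0:ℝ) ≤ α - 1 by linarith)]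
      have hB2 : B ≤ 2 * (1 + v) := by rw [hBdef]; linarith
      have hBK : B ^ (K : ℝ) ≤ 2 ^ (K : ℝ) * (1 + v) ^ (K : ℝ) := by
        calc B ^ (K : ℝ) ≤ (2 * (1 + v)) ^ (K : ℝ) :=
              Real.rpow_le_rpow (by linarith) hB2 hKc
          _ = _ := Real.mul_rpow (by norm_num) (by linarith)
      calc |F ξ η| * B ^ (K : ℝ)
          ≤ M * (2 ^ (K : ℝ) * (1 + v) ^ (K : ℝ)) :=
            mul_le_mul hFle hBK (by positivity) hM0
        _ = 2 ^ (K : ℝ) * (D₂ / (1 + v) ^ (K : ℝ) * (1 + v) ^ (K : ℝ)) := by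
            rw [hMdef]; ring
        _ = 2 ^ (K : ℝ) * D₂ := by rw [div_mul_cancel₀ _ (ne_of_gt hv1)]
        _ ≤ C₀ := hC₀def ▸ le_max_right _ _
  -- conclude
  have hBpos : (0:ℝ) < B := lt_of_lt_of_le one_pos hB1
  have hxia : |ξ| = u ^ α := by
    rw [hudef, ← Real.rpow_mul (abs_nonneg ξ)]
    rw [show 1 / α * α = 1 by field_simp, Real.rpow_one]
  have hAB : A ≤ 3 * B ^ α := by
    have h1 : (1:ℝ) ≤ B ^ α := Real.one_le_rpow hB1 hα0.le
    have h2 : u ^ α ≤ B ^ α :=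
      Real.rpow_le_rpow hu0.le (by rw [hBdef]; linarith) hα0.le
    have h3 : v ≤ B ^ α := by
      have h4 : B ^ (1:ℝ) ≤ B ^ α := Real.rpow_le_rpow_of_exponent_le hB1 hα.le
      rw [Real.rpow_one] at h4
      have h5 : v ≤ B := by rw [hBdef]; linarith
      linarith
    rw [hAdef, hxia, ← hvdef]
    linarith
  have hApow : A ^ N ≤ 3 ^ N * B ^ (K : ℝ) := by
    calc A ^ N ≤ (3 * B ^ α) ^ N := Real.rpow_le_rpow (by linarith) hAB hN.le
      _ = 3 ^ N * (B ^ α) ^ N := Real.mul_rpow (by norm_num) (Real.rpow_nonneg hBpos.le α)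
      _ = 3 ^ N * B ^ (α * N) := by rw [← Real.rpow_mul hBpos.le]
      _ ≤ 3 ^ N * B ^ (K : ℝ) := by
          have h6 := Real.rpow_le_rpow_of_exponent_le hB1 hKge
          have h3N : (0:ℝ) ≤ 3 ^ N := Real.rpow_nonneg (by norm_num) N
          exact mul_le_mul_of_nonneg_left h6 h3N
  have hApos : 0 < A ^ N := Real.rpow_pos_of_pos (by linarith) N
  rw [← hAdef, Real.rpow_neg (by linarith : (0:ℝ) ≤ A), ← div_eq_mul_inv, le_div_iff₀ hApos]
  calc |F ξ η| * A ^ N ≤ |F ξ η| * (3 ^ N * B ^ (K : ℝ)) :=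
        mul_le_mul_of_nonneg_left hApow (abs_nonneg _)
    _ = 3 ^ N * (|F ξ η| * B ^ (K : ℝ)) := by ring
    _ ≤ 3 ^ N * C₀ := mul_le_mul_of_nonneg_left hclaim (Real.rpow_nonneg (by norm_num) N)
end

section
/- Let α > 1, c ∈ ℝ, and f ∈ 𝒮(ℝ²) with (∂^k f/∂x^k)(c,y) = 0 for k = 0,…,m where m ≥ α - 2. Define Q_α f(s,u) = ∫_ℝ f(x+c, s x|x|^{α-1} + u) dx and F_α(ξ,η) = f(sgn(ξ)|ξ|^{1/α}+c, η)/(α|ξ|^{(α-1)/α}) for ξ ≠ 0. Then for all s, u ∈ ℝ: Q_α f(s,u) = ∫_ℝ F_α(ξ, sξ + u) dξ. -/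
open MeasureTheory

private lemma rpow_split {α x : ℝ} (hx : 0 < x) : x * x ^ (α - 1) = x ^ α := by
  calc x * x ^ (α - 1) = x ^ (1:ℝ) * x ^ (α - 1) := by rw [Real.rpow_one]
    _ = x ^ (1 + (α - 1)) := (Real.rpow_add hx 1 (α - 1)).symm
    _ = x ^ α := by ring_nf

private lemma sign_mul_abs' (x : ℝ) : Real.sign x * |x| = x := by
  rcases lt_trichotomy x 0 with h | h | h
  · rw [Real.sign_of_neg h, abs_of_neg h]; ring
  · simp [h]
  · rw [Real.sign_of_pos h, abs_of_pos h, one_mul]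

private lemma phi_hasDerivAt {α : ℝ} (hα : 1 < α) (x : ℝ) :
    HasDerivAt (fun x : ℝ => x * |x| ^ (α - 1)) (α * |x| ^ (α - 1)) x := by
  have hα1 : (0:ℝ) < α - 1 := by linarith
  rcases lt_trichotomy x 0 with hx | hx | hx
  · have h1 : HasDerivAt (fun y : ℝ => -((-y) ^ α)) (α * (-x) ^ (α - 1)) x := by
      have h2 := (Real.hasDerivAt_rpow_const (x := -x) (p := α) (Or.inr hα.le)).comp x
        (hasDerivAt_neg x)
      have h3 := h2.neg
      exact h3.congr_deriv (by ring)
    have heq : (fun y : ℝ => y * |y| ^ (α - 1)) =ᶠ[nhds x] (fun y : ℝ => -((-y) ^ α)) := by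
      filter_upwards [Iio_mem_nhds hx] with y hy
      have hy' : (y:ℝ) < 0 := hy
      have hpos : (0:ℝ) < -y := by linarith
      rw [abs_of_neg hy', ← rpow_split (α := α) hpos, neg_mul, neg_neg]
    have := h1.congr_of_eventuallyEq heq
    rwa [abs_of_neg hx]
  · subst hx
    rw [hasDerivAt_iff_tendsto_slope]
    have hcont : ContinuousAt (fun y : ℝ => |y| ^ (α - 1)) 0 :=
      (Real.continuousAt_rpow_const _ _ (Or.inr hα1.le)).comp continuous_abs.continuousAt
    have h0 : |(0:ℝ)| ^ (α - 1) = 0 := by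
      rw [abs_zero, Real.zero_rpow hα1.ne']
    have htend : Filter.Tendsto (fun y : ℝ => |y| ^ (α - 1)) (nhdsWithin 0 {(0:ℝ)}ᶜ)
        (nhds (α * |(0:ℝ)| ^ (α - 1))) := by
      have := hcont.tendsto.mono_left (nhdsWithin_le_nhds (s := {(0:ℝ)}ᶜ))
      simp only [h0] at this ⊢
      rwa [mul_zero]
    refine htend.congr' ?_
    filter_upwards [self_mem_nhdsWithin] with y hy
    have hy' : (y:ℝ) ≠ 0 := hy
    rw [slope_def_field]
    rw [abs_zero, Real.zero_rpow hα1.ne', mul_zero, sub_zero, sub_zero,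
      mul_div_cancel_left₀ _ hy']
  · have h1 : HasDerivAt (fun y : ℝ => y ^ α) (α * x ^ (α - 1)) x :=
      Real.hasDerivAt_rpow_const (Or.inr hα.le)
    have heq : (fun y : ℝ => y * |y| ^ (α - 1)) =ᶠ[nhds x] (fun y : ℝ => y ^ α) := by
      filter_upwards [Ioi_mem_nhds hx] with y hy
      have hy' : (0:ℝ) < y := hy
      rw [abs_of_pos hy', rpow_split hy']
    have := h1.congr_of_eventuallyEq heq
    rwa [abs_of_pos hx]

private lemma phi_strictMono {α : ℝ} (hα : 1 < α) :
    StrictMono (fun x : ℝ => x * |x| ^ (α - 1)) := by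
  have hα0 : (0:ℝ) < α := by linarith
  have key : ∀ x : ℝ, 0 ≤ x → x * |x| ^ (α - 1) = x ^ α := by
    intro x hx
    rcases hx.eq_or_lt with h | h
    · rw [← h, abs_zero, Real.zero_rpow (by linarith : α - 1 ≠ 0), Real.zero_rpow hα0.ne',
        zero_mul]
    · rw [abs_of_pos h, rpow_split h]
  have keyneg : ∀ x : ℝ, x ≤ 0 → x * |x| ^ (α - 1) = -((-x) ^ α) := by
    intro x hx
    have h := key (-x) (by linarith)
    rw [abs_neg] at h
    nlinarith [h]
  intro a b hab
  simp only
  rcases le_or_gt 0 a with ha | ha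
  · rw [key a ha, key b (le_trans ha hab.le)]
    exact Real.rpow_lt_rpow ha hab hα0
  · rcases le_or_gt b 0 with hb | hb
    · rw [keyneg a ha.le, keyneg b hb]
      have : (-b) ^ α < (-a) ^ α := Real.rpow_lt_rpow (by linarith) (by linarith) hα0
      linarith
    · rw [keyneg a ha.le, key b hb.le]
      have h1 : (0:ℝ) < (-a) ^ α := Real.rpow_pos_of_pos (by linarith) α
      have h2 : (0:ℝ) < b ^ α := Real.rpow_pos_of_pos hb α
      linarith

private lemma phi_surjective {α : ℝ} (hα : 1 < α) :
    Function.Surjective (fun x : ℝ => x * |x| ^ (α - 1)) := by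
  have hα0 : (0:ℝ) < α := by linarith
  intro ξ
  rcases eq_or_ne ξ 0 with h | h
  · exact ⟨0, by simp [h, Real.zero_rpow (show α - 1 ≠ 0 by linarith)]⟩
  · refine ⟨Real.sign ξ * |ξ| ^ (1 / α), ?_⟩
    have hξ : (0:ℝ) < |ξ| := abs_pos.mpr h
    have habs : |Real.sign ξ * |ξ| ^ (1 / α)| = |ξ| ^ (1 / α) := by
      rw [abs_mul, abs_of_nonneg (Real.rpow_nonneg (abs_nonneg ξ) _)]
      rcases Real.sign_apply_eq_of_ne_zero ξ h with hs | hs <;> rw [hs] <;> norm_num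
    simp only [habs]
    rw [← Real.rpow_mul (abs_nonneg ξ), mul_assoc, ← Real.rpow_add hξ]
    have : 1 / α + 1 / α * (α - 1) = 1 := by field_simp; ring
    rw [this, Real.rpow_one, sign_mul_abs']

/-- The change of variable `x = sgn ξ |ξ|^{1/α}` turns `Q_α f` into the integral of
`F_α` over the line `η = sξ + u`. -/
theorem Qalpha_eq_line_integral (α c : ℝ) (hα : 1 < α) (m : ℕ) (hm : (m : ℝ) ≥ α - 2)
    (f : SchwartzMap (ℝ × ℝ) ℝ)
    (hvan : ∀ k ≤ m, ∀ y : ℝ, iteratedDeriv k (fun x : ℝ => f (x, y)) c = 0)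
    (F : ℝ → ℝ → ℝ)
    (hF : ∀ ξ : ℝ, ξ ≠ 0 → ∀ η : ℝ,
      F ξ η = f (Real.sign ξ * |ξ| ^ (1 / α) + c, η) / (α * |ξ| ^ ((α - 1) / α))) :
    ∀ s u : ℝ,
      (∫ x : ℝ, f (x + c, s * x * |x| ^ (α - 1) + u)) = ∫ ξ : ℝ, F ξ (s * ξ + u) := by
  intro s u
  have hα0 : (0:ℝ) < α := by linarith
  have hkey := MeasureTheory.integral_image_eq_integral_abs_deriv_smul
    (s := Set.univ) (f := fun x : ℝ => x * |x| ^ (α - 1))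
    (f' := fun x : ℝ => α * |x| ^ (α - 1)) MeasurableSet.univ
    (fun x _ => (phi_hasDerivAt hα x).hasDerivWithinAt)
    ((phi_strictMono hα).injective.injOn) (fun ξ => F ξ (s * ξ + u))
  rw [Set.image_univ, Set.range_eq_univ.mpr (phi_surjective hα),
    Measure.restrict_univ] at hkey
  rw [hkey]
  refine integral_congr_ae ?_
  have h0 : ∀ᵐ x : ℝ, x ≠ 0 := by
    rw [MeasureTheory.ae_iff]
    convert Real.volume_singleton (a := (0:ℝ)) using 2
    ext x
    simp
  filter_upwards [h0] with x hx
  have hp : (0:ℝ) < |x| ^ (α - 1) := Real.rpow_pos_of_pos (abs_pos.mpr hx) _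
  have hξ0 : x * |x| ^ (α - 1) ≠ 0 := mul_ne_zero hx hp.ne'
  rw [hF _ hξ0]
  have habs0 : |x * |x| ^ (α - 1)| = |x| ^ α := by
    rw [abs_mul, abs_of_nonneg (Real.rpow_nonneg (abs_nonneg x) _), rpow_split (abs_pos.mpr hx)]
  have h1 : |x * |x| ^ (α - 1)| ^ (1 / α) = |x| := by
    rw [habs0, ← Real.rpow_mul (abs_nonneg x), mul_one_div, div_self hα0.ne', Real.rpow_one]
  have h2 : |x * |x| ^ (α - 1)| ^ ((α - 1) / α) = |x| ^ (α - 1) := by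
    rw [habs0, ← Real.rpow_mul (abs_nonneg x)]
    congr 1
    field_simp
  have hsign : Real.sign (x * |x| ^ (α - 1)) = Real.sign x := by
    rcases lt_trichotomy x 0 with h | h | h
    · rw [Real.sign_of_neg (mul_neg_of_neg_of_pos h hp), Real.sign_of_neg h]
    · exact absurd h hx
    · rw [Real.sign_of_pos (mul_pos h hp), Real.sign_of_pos h]
  rw [h1, h2, hsign, sign_mul_abs']
  rw [smul_eq_mul, abs_of_pos (by positivity : (0:ℝ) < α * |x| ^ (α - 1)),
    mul_comm (α * |x| ^ (α - 1)), div_mul_cancel₀ _ (by positivity : α * |x| ^ (α - 1) ≠ 0)]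
  rw [mul_assoc]
end

section
/- Let α > 1, c ∈ ℝ, and f ∈ 𝒮(ℝ²) with f(x+c,y) = f(-x+c,y) for all x,y and (∂^k f/∂x^k)(c,y)=0 for k=0,…,m where m ≥ α - 2. Define P_α f(s,u) = ∫_ℝ f(x+c, s|x|^α + u) dx and F_α^P(ξ,η) = 2 f(ξ^{1/α}+c, η)/(α ξ^{(α-1)/α}) for ξ > 0 and 0 otherwise. Then P_α f(s,u) = ∫_ℝ F_α^P(ξ, sξ + u) dξ for all s, u. -/
open MeasureTheory

/-- The change of variable `ξ = |x|^α` turns `P_α f` into the integral of `F_α^P` over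
the line `η = sξ + u`. -/
theorem Palpha_eq_line_integral (α c : ℝ) (hα : 1 < α) (m : ℕ) (hm : (m : ℝ) ≥ α - 2)
    (f : SchwartzMap (ℝ × ℝ) ℝ)
    (hsym : ∀ x y : ℝ, f (x + c, y) = f (-x + c, y))
    (hvan : ∀ k ≤ m, ∀ y : ℝ, iteratedDeriv k (fun x : ℝ => f (x, y)) c = 0)
    (F : ℝ → ℝ → ℝ)
    (hF : ∀ ξ η : ℝ,
      F ξ η = if 0 < ξ then 2 * f (ξ ^ (1 / α) + c, η) / (α * ξ ^ ((α - 1) / α)) else 0) :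
    ∀ s u : ℝ,
      (∫ x : ℝ, f (x + c, s * |x| ^ α + u)) = ∫ ξ : ℝ, F ξ (s * ξ + u) := by
  intro s u
  have hα0 : (0 : ℝ) < α := by linarith
  set h : ℝ → ℝ := fun t => f (t + c, s * t ^ α + u) with hh
  set G : ℝ → ℝ := fun ξ => 2 * f (ξ ^ (1 / α) + c, s * ξ + u) / (α * ξ ^ ((α - 1) / α)) with hGdef
  -- Rewrite the RHS as an integral over `Ioi 0`.
  have hRHS : (∫ ξ : ℝ, F ξ (s * ξ + u)) = ∫ ξ in Set.Ioi (0 : ℝ), G ξ := by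
    rw [← integral_indicator measurableSet_Ioi]
    congr 1
    funext ξ
    rw [hF]
    by_cases hξ : 0 < ξ
    · simp only [Set.indicator_apply, Set.mem_Ioi, hξ, if_true]; rfl
    · simp only [Set.indicator_apply, Set.mem_Ioi, hξ, if_false]
  -- Rewrite the LHS as an even function of `x`.
  have hLHS : (∫ x : ℝ, f (x + c, s * |x| ^ α + u)) = ∫ x : ℝ, h |x| := by
    congr 1
    funext x
    rcases le_or_gt 0 x with hx | hx
    · rw [hh]; simp only [abs_of_nonneg hx]
    · rw [hh]; simp only [abs_of_neg hx]
      exact hsym x _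
  -- change of variables ξ = x ^ α on Ioi 0
  have hsub : (∫ ξ in Set.Ioi (0 : ℝ), G ξ)
      = ∫ x in Set.Ioi (0 : ℝ), (|α| * x ^ (α - 1)) • G (x ^ α) :=
    (integral_comp_rpow_Ioi G (ne_of_gt hα0)).symm
  have hpt : ∀ x ∈ Set.Ioi (0 : ℝ), (|α| * x ^ (α - 1)) • G (x ^ α) = 2 * h x := by
    intro x hx
    have hx0 : (0 : ℝ) < x := hx
    have h1 : (x ^ α) ^ (1 / α) = x := by
      rw [one_div, Real.rpow_rpow_inv hx0.le (ne_of_gt hα0)]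
    have h2 : (x ^ α) ^ ((α - 1) / α) = x ^ (α - 1) := by
      rw [← Real.rpow_mul hx0.le]
      congr 1
      field_simp
    have hxp : (0 : ℝ) < x ^ (α - 1) := Real.rpow_pos_of_pos hx0 _
    rw [hGdef, hh]
    simp only [h1, h2, smul_eq_mul, abs_of_pos hα0]
    field_simp
  calc
    (∫ x : ℝ, f (x + c, s * |x| ^ α + u)) = ∫ x : ℝ, h |x| := hLHS
    _ = 2 * ∫ x in Set.Ioi (0 : ℝ), h x := integral_comp_abs
    _ = ∫ x in Set.Ioi (0 : ℝ), 2 * h x := (integral_const_mul 2 h).symm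
    _ = ∫ x in Set.Ioi (0 : ℝ), (|α| * x ^ (α - 1)) • G (x ^ α) :=
        (setIntegral_congr_fun measurableSet_Ioi hpt).symm
    _ = ∫ ξ in Set.Ioi (0 : ℝ), G ξ := hsub.symm
    _ = ∫ ξ : ℝ, F ξ (s * ξ + u) := hRHS.symm
end

section
/- Let α, β > 1, c ∈ ℝ, and f ∈ 𝒮(ℝ²) with f(x+c,y)=f(-x+c,y)=f(x+c,-y), f(x+c,0)=0, and (∂^k f/∂x^k)(c,y)=0 for k=0,…,m with m ≥ α - 2. Define F(ξ,η) = 2 f(ξ^{1/α}+c, η^{1/β})/(α ξ^{(α-1)/α} η^{1/β}) for ξ, η > 0 and 0 otherwise. Then for every N > 0 there is C_N > 0 with |F(ξ,η)| ≤ C_N(1+|ξ|+|η|)^{-N} for all (ξ,η) ∈ ℝ². -/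
open Set

noncomputable def Pit : ℕ → SchwartzMap (ℝ × ℝ) ℝ → SchwartzMap (ℝ × ℝ) ℝ
  | 0, φ => φ
  | n+1, φ => Pit n (LineDeriv.lineDerivOpCLM ℝ (SchwartzMap (ℝ × ℝ) ℝ) ((1:ℝ), (0:ℝ)) φ)

lemma hasDerivAt_fst_coord (φ : SchwartzMap (ℝ × ℝ) ℝ) (v t : ℝ) :
    HasDerivAt (fun x => φ (x, v)) (LineDeriv.lineDerivOpCLM ℝ (SchwartzMap (ℝ × ℝ) ℝ) ((1:ℝ), (0:ℝ)) φ (t, v)) t := by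
  have h1 : HasDerivAt (fun x : ℝ => ((x, v) : ℝ × ℝ)) ((1:ℝ), (0:ℝ)) t :=
    (hasDerivAt_id t).prodMk (hasDerivAt_const t v)
  have h2 := (φ.differentiableAt (x := (t, v))).hasFDerivAt
  have h3 := h2.comp_hasDerivAt t h1
  simp only [LineDeriv.lineDerivOpCLM_apply, SchwartzMap.lineDerivOp_apply_eq_fderiv]
  exact h3

lemma hasDerivAt_snd_coord (φ : SchwartzMap (ℝ × ℝ) ℝ) (t s : ℝ) :
    HasDerivAt (fun y => φ (t, y)) (LineDeriv.lineDerivOpCLM ℝ (SchwartzMap (ℝ × ℝ) ℝ) ((0:ℝ), (1:ℝ)) φ (t, s)) s := by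
  have h1 : HasDerivAt (fun y : ℝ => ((t, y) : ℝ × ℝ)) ((0:ℝ), (1:ℝ)) s :=
    (hasDerivAt_const s t).prodMk (hasDerivAt_id s)
  have h2 := (φ.differentiableAt (x := (t, s))).hasFDerivAt
  have h3 := h2.comp_hasDerivAt s h1
  simp only [LineDeriv.lineDerivOpCLM_apply, SchwartzMap.lineDerivOp_apply_eq_fderiv]
  exact h3

lemma iteratedDeriv_fst_coord (n : ℕ) : ∀ (φ : SchwartzMap (ℝ × ℝ) ℝ) (v t : ℝ),
    iteratedDeriv n (fun x => φ (x, v)) t = Pit n φ (t, v) := by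
  induction n with
  | zero => intro φ v t; simp [Pit]
  | succ n ih =>
    intro φ v t
    rw [iteratedDeriv_succ']
    have hd : deriv (fun x => φ (x, v))
        = fun x => LineDeriv.lineDerivOpCLM ℝ (SchwartzMap (ℝ × ℝ) ℝ) ((1:ℝ), (0:ℝ)) φ (x, v) :=
      funext fun x => (hasDerivAt_fst_coord φ v x).deriv
    rw [hd, ih]
    rfl

lemma iteratedDeriv_zero_fun (n : ℕ) (t : ℝ) :
    iteratedDeriv n (fun _ : ℝ => (0:ℝ)) t = 0 := by
  induction n generalizing t with
  | zero => simp
  | succ n ih =>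
    rw [iteratedDeriv_succ']
    have : deriv (fun _ : ℝ => (0:ℝ)) = fun _ : ℝ => (0:ℝ) := by
      funext x; simp
    rw [this]; exact ih t

lemma schwartz_decay_one_add (φ : SchwartzMap (ℝ × ℝ) ℝ) (K : ℕ) :
    ∃ C : ℝ, 0 < C ∧ ∀ p : ℝ × ℝ, |φ p| * (1 + ‖p‖) ^ K ≤ C := by
  obtain ⟨C0, hC0, h0⟩ := φ.decay 0 0
  obtain ⟨C1, hC1, h1⟩ := φ.decay K 0
  refine ⟨2 ^ K * (C0 + C1), by positivity, fun p => ?_⟩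
  have e0 : ‖iteratedFDeriv ℝ 0 (⇑φ) p‖ = |φ p| := by
    simp [norm_iteratedFDeriv_zero]
  have h0' := h0 p; have h1' := h1 p
  rw [e0] at h0' h1'
  simp only [pow_zero, one_mul] at h0'
  have hp : (0:ℝ) ≤ ‖p‖ := norm_nonneg p
  have key : (1 + ‖p‖) ^ K ≤ 2 ^ K * (1 + ‖p‖ ^ K) := by
    rcases le_total ‖p‖ 1 with h | h
    · calc (1 + ‖p‖) ^ K ≤ 2 ^ K := pow_le_pow_left₀ (by linarith) (by linarith) K
        _ ≤ 2 ^ K * (1 + ‖p‖ ^ K) :=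
          le_mul_of_one_le_right (by positivity) (by nlinarith [pow_nonneg hp K])
    · calc (1 + ‖p‖) ^ K ≤ (2 * ‖p‖) ^ K := pow_le_pow_left₀ (by linarith) (by linarith) K
        _ = 2 ^ K * ‖p‖ ^ K := mul_pow 2 ‖p‖ K
        _ ≤ 2 ^ K * (1 + ‖p‖ ^ K) := by
          have : (0:ℝ) ≤ (2:ℝ) ^ K := by positivity
          nlinarith
  calc |φ p| * (1 + ‖p‖) ^ K ≤ |φ p| * (2 ^ K * (1 + ‖p‖ ^ K)) :=
        mul_le_mul_of_nonneg_left key (abs_nonneg _)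
    _ = 2 ^ K * (|φ p| + ‖p‖ ^ K * |φ p|) := by ring
    _ ≤ 2 ^ K * (C0 + C1) := by
        have h2 : (0:ℝ) ≤ (2:ℝ) ^ K := by positivity
        exact mul_le_mul_of_nonneg_left (add_le_add h0' h1') h2

lemma mv_snd_coord (φ : SchwartzMap (ℝ × ℝ) ℝ) (t v M : ℝ) (hv : 0 ≤ v)
    (hb : ∀ s, 0 ≤ s → s ≤ v → |LineDeriv.lineDerivOpCLM ℝ (SchwartzMap (ℝ × ℝ) ℝ) ((0:ℝ), (1:ℝ)) φ (t, s)| ≤ M) :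
    |φ (t, v) - φ (t, 0)| ≤ M * v := by
  have hder : ∀ s ∈ Icc (0:ℝ) v, HasDerivWithinAt (fun y => φ (t, y))
      (LineDeriv.lineDerivOpCLM ℝ (SchwartzMap (ℝ × ℝ) ℝ) ((0:ℝ), (1:ℝ)) φ (t, s)) (Icc 0 v) s :=
    fun s _ => (hasDerivAt_snd_coord φ t s).hasDerivWithinAt
  have h := Convex.norm_image_sub_le_of_norm_hasDerivWithin_le hder
      (fun s hs => by simpa using hb s hs.1 hs.2) (convex_Icc 0 v)
      (left_mem_Icc.mpr hv) (right_mem_Icc.mpr hv)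
  simpa [Real.norm_eq_abs, abs_of_nonneg hv] using h

lemma iteratedDerivWithin_eq_iteratedDeriv' {g : ℝ → ℝ} (hg : ∀ n : ℕ, ContDiff ℝ n g)
    {s : Set ℝ} (hs : UniqueDiffOn ℝ s) (n : ℕ) :
    ∀ x ∈ s, iteratedDerivWithin n g s x = iteratedDeriv n g x := by
  induction n with
  | zero => intro x hx; simp
  | succ n ih =>
    intro x hx
    rw [iteratedDerivWithin_succ, iteratedDeriv_succ]
    rw [derivWithin_congr (fun y hy => ih y hy) (ih x hx)]
    have hdiff : Differentiable ℝ (iteratedDeriv n g) := by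
      apply ContDiff.differentiable_iteratedDeriv'
      exact_mod_cast hg (n + 1)
    exact hdiff.differentiableAt.derivWithin (hs x hx)

set_option maxHeartbeats 1000000 in
/-- Rapid decay of `F_{α,β}^R`. -/
theorem FR_decay (α β c : ℝ) (hα : 1 < α) (hβ : 1 < β)
    (m : ℕ) (hm : (m : ℝ) ≥ α - 2)
    (f : SchwartzMap (ℝ × ℝ) ℝ)
    (hsymx : ∀ x y : ℝ, f (x + c, y) = f (-x + c, y))
    (hsymy : ∀ x y : ℝ, f (x + c, y) = f (x + c, -y))
    (h0 : ∀ x : ℝ, f (x + c, 0) = 0)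
    (hvan : ∀ k ≤ m, ∀ y : ℝ, iteratedDeriv k (fun x : ℝ => f (x, y)) c = 0)
    (F : ℝ → ℝ → ℝ)
    (hF : ∀ ξ η : ℝ,
      F ξ η = if 0 < ξ ∧ 0 < η then
        2 * f (ξ ^ (1 / α) + c, η ^ (1 / β)) / (α * ξ ^ ((α - 1) / α) * η ^ (1 / β))
      else 0) :
    ∀ N : ℝ, 0 < N → ∃ C : ℝ, 0 < C ∧
      ∀ ξ η : ℝ, |F ξ η| ≤ C * (1 + |ξ| + |η|) ^ (-N) := by
  intro N hN
  have hα0 : (0:ℝ) < α := by linarith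
  have hβ0 : (0:ℝ) < β := by linarith
  set γ : ℝ := max α β with hγdef
  have hγ1 : 1 ≤ γ := le_trans hα.le (le_max_left _ _)
  set K : ℕ := ⌈γ * N⌉₊ with hKdef
  have hf0 : ∀ x : ℝ, f (x, 0) = 0 := fun x => by
    have h := h0 (x - c); rwa [sub_add_cancel] at h
  set φm := Pit (m+1) f with hφmdef
  have hφm0 : ∀ t : ℝ, φm (t, 0) = 0 := by
    intro t
    have h1 := iteratedDeriv_fst_coord (m+1) f 0 t
    have h2 : (fun x : ℝ => f (x, 0)) = fun _ : ℝ => (0:ℝ) := funext hf0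
    rw [← h1, h2, iteratedDeriv_zero_fun]
  obtain ⟨Cd, hCd0, hCd⟩ := schwartz_decay_one_add φm K
  obtain ⟨M, hM0, hM'⟩ := schwartz_decay_one_add (LineDeriv.lineDerivOpCLM ℝ (SchwartzMap (ℝ × ℝ) ℝ) ((0:ℝ),(1:ℝ)) φm) 0
  have hM : ∀ p : ℝ × ℝ, |LineDeriv.lineDerivOpCLM ℝ (SchwartzMap (ℝ × ℝ) ℝ) ((0:ℝ),(1:ℝ)) φm p| ≤ M := fun p => by
    have h := hM' p; simpa using h
  obtain ⟨Cf, hCf0, hCf⟩ := schwartz_decay_one_add f K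
  obtain ⟨CQ, hCQ0, hCQ⟩ := schwartz_decay_one_add (LineDeriv.lineDerivOpCLM ℝ (SchwartzMap (ℝ × ℝ) ℝ) ((0:ℝ),(1:ℝ)) f) K
  -- Taylor representation in the first variable
  have hTay : ∀ u v : ℝ, 0 < u → ∃ t ∈ Ioo c (c+u),
      f (c+u, v) = φm (t, v) * u^(m+1) / (Nat.factorial (m+1) : ℝ) := by
    intro u v hu
    have hcu : c < c + u := by linarith
    have husd := uniqueDiffOn_Icc hcu
    have hg : ∀ n : ℕ, ContDiff ℝ n (fun x => f (x, v)) := fun n =>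
      (f.smooth n).comp (contDiff_id.prodMk contDiff_const)
    have heq := fun n => iteratedDerivWithin_eq_iteratedDeriv' hg husd n
    have hdiff : DifferentiableOn ℝ
        (iteratedDerivWithin m (fun x => f (x, v)) (Icc c (c+u))) (Ioo c (c+u)) := by
      have hdg : Differentiable ℝ (iteratedDeriv m (fun x => f (x, v))) := by
        apply ContDiff.differentiable_iteratedDeriv'
        exact_mod_cast hg (m+1)
      exact hdg.differentiableOn.congr (fun y hy => heq m y (Ioo_subset_Icc_self hy))
    obtain ⟨t, ht, hts⟩ := taylor_mean_remainder_lagrange (x₀ := c) (x := c+u) hcu.ne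
      (by rw [uIcc_of_le hcu.le]; exact (hg m).contDiffOn)
      (by rw [uIcc_of_le hcu.le, uIoo_of_lt hcu]; exact hdiff)
    rw [uIoo_of_lt hcu] at ht; rw [uIcc_of_le hcu.le] at hts
    have htay0 : taylorWithinEval (fun x => f (x, v)) m (Icc c (c+u)) c (c+u) = 0 := by
      rw [taylor_within_apply]
      apply Finset.sum_eq_zero
      intro k hk
      rw [heq k c (left_mem_Icc.mpr hcu.le),
        hvan k (Nat.lt_succ_iff.mp (Finset.mem_range.mp hk)) v, smul_zero]
    rw [htay0, sub_zero] at hts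
    refine ⟨t, ht, ?_⟩
    rw [hts, heq (m+1) t (Ioo_subset_Icc_self ht), iteratedDeriv_fst_coord,
      add_sub_cancel_left]
  -- bound on φm values
  have hφmB : ∀ t v : ℝ, 0 ≤ v → |φm (t, v)| * (1+v)^K ≤ (Cd + M) * 2^K * min v 1 := by
    intro t v hv
    have h2K : (1:ℝ) ≤ 2^K := one_le_pow₀ (by norm_num)
    rcases le_total v 1 with hv1 | hv1
    · have h1 : |φm (t, v) - φm (t, 0)| ≤ M * v :=
        mv_snd_coord φm t v M hv (fun s _ _ => hM (t, s))
      rw [hφm0 t, sub_zero] at h1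
      have h2 : (1+v)^K ≤ 2^K := pow_le_pow_left₀ (by linarith) (by linarith) K
      rw [min_eq_left hv1]
      calc |φm (t,v)| * (1+v)^K ≤ (M*v) * 2^K :=
            mul_le_mul h1 h2 (by positivity) (by positivity)
        _ = (M*2^K)*v := by ring
        _ ≤ ((Cd+M)*2^K)*v := mul_le_mul_of_nonneg_right
            (mul_le_mul_of_nonneg_right (by linarith) (by positivity)) hv
        _ = (Cd+M)*2^K*v := by ring
    · rw [min_eq_right hv1]
      have hsnd : v ≤ ‖((t,v) : ℝ×ℝ)‖ :=
        le_trans (le_abs_self v) (by simpa using norm_snd_le ((t,v) : ℝ×ℝ))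
      have h2 : (1+v)^K ≤ (1+‖((t,v):ℝ×ℝ)‖)^K :=
        pow_le_pow_left₀ (by linarith) (by linarith) K
      calc |φm (t,v)| * (1+v)^K ≤ |φm (t,v)| * (1+‖((t,v):ℝ×ℝ)‖)^K :=
            mul_le_mul_of_nonneg_left h2 (abs_nonneg _)
        _ ≤ Cd := hCd _
        _ ≤ (Cd+M)*2^K*1 := by nlinarith
  -- bound for small u
  have hA : ∀ u v : ℝ, 0 < u → u ≤ 1 → 0 ≤ v →
      |f (c+u, v)| * (1+v)^K ≤ (Cd+M)*2^K * min v 1 * u^(m+1) := by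
    intro u v hu hu1 hv
    obtain ⟨t, ht, heq⟩ := hTay u v hu
    have hfac : (1:ℝ) ≤ (Nat.factorial (m+1) : ℝ) := by
      exact_mod_cast Nat.one_le_iff_ne_zero.mpr (Nat.factorial_ne_zero (m+1))
    have habs : |f (c+u,v)| ≤ |φm (t,v)| * u^(m+1) := by
      rw [heq, abs_div, abs_mul, abs_pow, abs_of_pos hu,
        abs_of_pos (show (0:ℝ) < (Nat.factorial (m+1) : ℝ) by exact_mod_cast Nat.factorial_pos (m+1))]
      exact div_le_self (by positivity) hfac
    calc |f (c+u,v)| * (1+v)^K ≤ (|φm (t,v)| * u^(m+1)) * (1+v)^K :=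
          mul_le_mul_of_nonneg_right habs (by positivity)
      _ = (|φm (t,v)| * (1+v)^K) * u^(m+1) := by ring
      _ ≤ ((Cd+M)*2^K * min v 1) * u^(m+1) :=
          mul_le_mul_of_nonneg_right (hφmB t v hv) (by positivity)
      _ = (Cd+M)*2^K * min v 1 * u^(m+1) := by ring
  -- key elementary inequality
  have hkey1 : ∀ u : ℝ, 0 ≤ u → 1 + u ≤ (1+|c|)*(1+|c+u|) := by
    intro u hu
    have h2 : |u| ≤ |c+u| + |c| := by
      have he : u = (c+u) + (-c) := by ring
      calc |u| = |(c+u) + (-c)| := by rw [← he]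
        _ ≤ |c+u| + |(-c)| := abs_add_le _ _
        _ = |c+u| + |c| := by rw [abs_neg]
    have h3 : u ≤ |c+u| + |c| := le_trans (le_abs_self u) h2
    nlinarith [abs_nonneg c, abs_nonneg (c+u)]
  -- bound for large u
  have hBB : ∀ u v : ℝ, 1 ≤ u → 0 ≤ v →
      |f (c+u, v)| * (1+u+v)^K ≤ ((Cf+CQ) * (2*(1+|c|))^K) * min v 1 := by
    intro u v hu hv
    have hu0 : (0:ℝ) ≤ u := by linarith
    have hX := hkey1 u hu0
    rcases le_total v 1 with hv1 | hv1
    · have hc1 : (0:ℝ) < (1+|c+u|)^K := by positivity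
      have hmv : |f (c+u, v) - f (c+u, 0)| ≤ (CQ / (1+|c+u|)^K) * v := by
        apply mv_snd_coord f (c+u) v _ hv
        intro s hs0 hsv
        rw [le_div_iff₀ hc1]
        have hfst : |c+u| ≤ ‖((c+u,s):ℝ×ℝ)‖ := by
          simpa using norm_fst_le ((c+u,s):ℝ×ℝ)
        have h1 : (1+|c+u|)^K ≤ (1+‖((c+u,s):ℝ×ℝ)‖)^K :=
          pow_le_pow_left₀ (by positivity) (by linarith) K
        calc |LineDeriv.lineDerivOpCLM ℝ (SchwartzMap (ℝ × ℝ) ℝ) ((0:ℝ),(1:ℝ)) f (c+u,s)| * (1+|c+u|)^K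
            ≤ |LineDeriv.lineDerivOpCLM ℝ (SchwartzMap (ℝ × ℝ) ℝ) ((0:ℝ),(1:ℝ)) f (c+u,s)| * (1+‖((c+u,s):ℝ×ℝ)‖)^K :=
              mul_le_mul_of_nonneg_left h1 (abs_nonneg _)
          _ ≤ CQ := hCQ _
      rw [hf0 (c+u), sub_zero] at hmv
      have h2 : 1+u+v ≤ (2*(1+|c|))*(1+|c+u|) := by nlinarith [abs_nonneg c, abs_nonneg (c+u)]
      have h3 : (1+u+v)^K ≤ (2*(1+|c|))^K * (1+|c+u|)^K := by
        rw [← mul_pow]; exact pow_le_pow_left₀ (by linarith) h2 K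
      rw [min_eq_left hv1]
      calc |f (c+u,v)| *(1+u+v)^K
          ≤ ((CQ/(1+|c+u|)^K)*v) * ((2*(1+|c|))^K * (1+|c+u|)^K) :=
            mul_le_mul hmv h3 (by positivity) (by positivity)
        _ = (CQ * (2*(1+|c|))^K) * v * ((1+|c+u|)^K / (1+|c+u|)^K) := by ring
        _ = (CQ * (2*(1+|c|))^K) * v := by rw [div_self (ne_of_gt hc1), mul_one]
        _ ≤ ((Cf+CQ)*(2*(1+|c|))^K) * v := mul_le_mul_of_nonneg_right
            (mul_le_mul_of_nonneg_right (by linarith) (by positivity)) hv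
    · rw [min_eq_right hv1]
      have hp : v ≤ ‖((c+u,v):ℝ×ℝ)‖ :=
        le_trans (le_abs_self v) (by simpa using norm_snd_le ((c+u,v):ℝ×ℝ))
      have hq : |c+u| ≤ ‖((c+u,v):ℝ×ℝ)‖ := by simpa using norm_fst_le ((c+u,v):ℝ×ℝ)
      have h2 : 1+u+v ≤ (2*(1+|c|))*(1+‖((c+u,v):ℝ×ℝ)‖) := by
        nlinarith [abs_nonneg c, norm_nonneg ((c+u,v):ℝ×ℝ),
          mul_nonneg (show (0:ℝ) ≤ 1+|c| by positivity) (sub_nonneg.mpr hq),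
          mul_nonneg (abs_nonneg c) (norm_nonneg ((c+u,v):ℝ×ℝ))]
      have h3 : (1+u+v)^K ≤ (2*(1+|c|))^K * (1+‖((c+u,v):ℝ×ℝ)‖)^K := by
        rw [← mul_pow]; exact pow_le_pow_left₀ (by linarith) h2 K
      calc |f (c+u,v)| *(1+u+v)^K
          ≤ |f (c+u,v)| * ((2*(1+|c|))^K*(1+‖((c+u,v):ℝ×ℝ)‖)^K) :=
            mul_le_mul_of_nonneg_left h3 (abs_nonneg _)
        _ = (|f (c+u,v)| *(1+‖((c+u,v):ℝ×ℝ)‖)^K) * (2*(1+|c|))^K := by ring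
        _ ≤ Cf * (2*(1+|c|))^K := mul_le_mul_of_nonneg_right (hCf _) (by positivity)
        _ ≤ ((Cf+CQ)*(2*(1+|c|))^K)*1 := by
            rw [mul_one]
            exact mul_le_mul_of_nonneg_right (by linarith) (by positivity)
  -- combined main estimate
  set C1 : ℝ := (Cd+M)*2^K*2^K + (Cf+CQ)*(2*(1+|c|))^K with hC1def
  have hC10 : 0 < C1 := by positivity
  have hME : ∀ u v : ℝ, 0 < u → 0 < v →
      |f (u+c, v)| * (1+u+v)^K ≤ C1 * (min u 1)^(m+1) * min v 1 := by
    intro u v hu hv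
    rw [add_comm u c]
    have hminv : (0:ℝ) ≤ min v 1 := le_min hv.le zero_le_one
    rcases le_total u 1 with hu1 | hu1
    · have h1 := hA u v hu hu1 hv.le
      have h2 : (1+u+v)^K ≤ 2^K*(1+v)^K := by
        rw [← mul_pow]; exact pow_le_pow_left₀ (by linarith) (by linarith) K
      rw [min_eq_left hu1]
      have hC1a : (Cd+M)*2^K*2^K ≤ C1 := by
        have : (0:ℝ) ≤ (Cf+CQ)*(2*(1+|c|))^K := by positivity
        linarith
      calc |f (c+u,v)| *(1+u+v)^K ≤ |f (c+u,v)| *(2^K*(1+v)^K) :=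
            mul_le_mul_of_nonneg_left h2 (abs_nonneg _)
        _ = (|f (c+u,v)| *(1+v)^K)*2^K := by ring
        _ ≤ ((Cd+M)*2^K*min v 1*u^(m+1))*2^K :=
            mul_le_mul_of_nonneg_right h1 (by positivity)
        _ = ((Cd+M)*2^K*2^K)*u^(m+1)*min v 1 := by ring
        _ ≤ C1*u^(m+1)*min v 1 := by
            have hp : (0:ℝ) ≤ u^(m+1)*min v 1 := by positivity
            nlinarith
    · have h1 := hBB u v hu1 hv.le
      rw [min_eq_right hu1, one_pow]
      have hC1b : (Cf+CQ)*(2*(1+|c|))^K ≤ C1 := by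
        have : (0:ℝ) ≤ (Cd+M)*2^K*2^K := by positivity
        linarith
      calc |f (c+u,v)| *(1+u+v)^K ≤ ((Cf+CQ)*(2*(1+|c|))^K) * min v 1 := h1
        _ ≤ C1 * min v 1 := mul_le_mul_of_nonneg_right hC1b hminv
        _ = C1 * 1 * min v 1 := by ring
  -- conclusion
  refine ⟨2*C1*(3:ℝ)^N/α + 1, by positivity, ?_⟩
  intro ξ η
  rw [hF]
  by_cases hcase : 0 < ξ ∧ 0 < η
  swap
  · rw [if_neg hcase, abs_zero]
    positivity
  rw [if_pos hcase]
  obtain ⟨hξ, hη⟩ := hcase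
  set u := ξ^(1/α) with hudef
  set v := η^(1/β) with hvdef
  have hu : 0 < u := Real.rpow_pos_of_pos hξ _
  have hv : 0 < v := Real.rpow_pos_of_pos hη _
  have hξu : ξ = u^α := by
    rw [hudef, ← Real.rpow_mul hξ.le, one_div, inv_mul_cancel₀ (ne_of_gt hα0), Real.rpow_one]
  have hηv : η = v^β := by
    rw [hvdef, ← Real.rpow_mul hη.le, one_div, inv_mul_cancel₀ (ne_of_gt hβ0), Real.rpow_one]
  have hden : ξ^((α-1)/α) = u^(α-1) := by
    rw [hudef, ← Real.rpow_mul hξ.le]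
    congr 1
    field_simp
  have hD : 0 < α * ξ^((α-1)/α) * η^(1/β) := by
    have h1 : (0:ℝ) < ξ^((α-1)/α) := Real.rpow_pos_of_pos hξ _
    have h2 : (0:ℝ) < η^(1/β) := Real.rpow_pos_of_pos hη _
    positivity
  rw [abs_div, abs_of_pos hD, abs_mul, (show |(2:ℝ)| = 2 by norm_num), div_le_iff₀ hD]
  rw [abs_of_pos hξ, abs_of_pos hη, hden]
  set W : ℝ := 1+u+v with hWdef
  set R : ℝ := 1+ξ+η with hRdef
  have hW1 : 1 ≤ W := by simp only [hWdef]; linarith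
  have hW0 : (0:ℝ) < W := by linarith
  have hR0 : (0:ℝ) < R := by simp only [hRdef]; linarith
  have hWγ : R ≤ 3*W^γ := by
    have h1 : (1:ℝ) ≤ W^γ := by
      calc (1:ℝ) = W^(0:ℝ) := (Real.rpow_zero W).symm
        _ ≤ W^γ := Real.rpow_le_rpow_of_exponent_le hW1 (by linarith)
    have h2 : ξ ≤ W^γ := by
      rw [hξu]
      calc u^α ≤ W^α := Real.rpow_le_rpow hu.le (by simp only [hWdef]; linarith) hα0.le
        _ ≤ W^γ := Real.rpow_le_rpow_of_exponent_le hW1 (le_max_left _ _)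
    have h3 : η ≤ W^γ := by
      rw [hηv]
      calc v^β ≤ W^β := Real.rpow_le_rpow hv.le (by simp only [hWdef]; linarith) hβ0.le
        _ ≤ W^γ := Real.rpow_le_rpow_of_exponent_le hW1 (le_max_right _ _)
    simp only [hRdef]; linarith
  have hE3 : R^N ≤ (3:ℝ)^N * W^K := by
    calc R^N ≤ (3*W^γ)^N := Real.rpow_le_rpow hR0.le hWγ hN.le
      _ = (3:ℝ)^N * (W^γ)^N := Real.mul_rpow (by norm_num) (by positivity)
      _ = (3:ℝ)^N * W^(γ*N) := by rw [← Real.rpow_mul hW0.le]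
      _ ≤ (3:ℝ)^N * W^((K:ℕ):ℝ) := by
          have h1 := Real.rpow_le_rpow_of_exponent_le hW1 (Nat.le_ceil (γ*N))
          have h2 : (0:ℝ) ≤ (3:ℝ)^N := by positivity
          exact mul_le_mul_of_nonneg_left h1 h2
      _ = (3:ℝ)^N * W^K := by rw [Real.rpow_natCast]
  have hWK0 : (0:ℝ) < W^K := by positivity
  have hRN0 : (0:ℝ) < R^N := Real.rpow_pos_of_pos hR0 N
  have hinv : (W^K)⁻¹ ≤ (3:ℝ)^N * (R^N)⁻¹ := by
    rw [← div_eq_mul_inv, le_div_iff₀ hRN0]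
    calc (W^K)⁻¹ * R^N ≤ (W^K)⁻¹*((3:ℝ)^N*W^K) :=
          mul_le_mul_of_nonneg_left hE3 (by positivity)
      _ = (3:ℝ)^N := by field_simp
  have hE1 : (min u 1:ℝ)^(m+1) ≤ u^(α-1) := by
    rcases le_total u 1 with h | h
    · rw [min_eq_left h]
      have hcast : u^(m+1) = u ^ (((m+1 : ℕ)):ℝ) := (Real.rpow_natCast u (m+1)).symm
      rw [hcast]
      apply Real.rpow_le_rpow_of_exponent_ge hu h
      push_cast
      linarith
    · rw [min_eq_right h, one_pow]
      calc (1:ℝ) = u^(0:ℝ) := (Real.rpow_zero u).symm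
        _ ≤ u^(α-1) := Real.rpow_le_rpow_of_exponent_le h (by linarith)
  have hE2 : min v 1 ≤ v := min_le_left _ _
  have hstep : |f (u+c,v)| ≤ C1 * u^(α-1) * v * (W^K)⁻¹ := by
    have h1 := hME u v hu hv
    have h2 : |f (u+c,v)| ≤ C1 * (min u 1)^(m+1) * min v 1 * (W^K)⁻¹ := by
      rw [← le_div_iff₀ hWK0] at h1
      rw [div_eq_mul_inv] at h1
      exact h1
    calc |f (u+c,v)| ≤ C1 * (min u 1)^(m+1) * min v 1 * (W^K)⁻¹ := h2
      _ ≤ C1 * u^(α-1) * v * (W^K)⁻¹ := by gcongr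
  have hfin : 2 * |f (u+c,v)| ≤
      (2*C1*(3:ℝ)^N/α + 1) * R^(-N) * (α * u^(α-1) * v) := by
    have hRneg : R^(-N) = (R^N)⁻¹ := Real.rpow_neg hR0.le N
    have h8 : 2*|f (u+c,v)| ≤ 2*(C1*u^(α-1)*v*(W^K)⁻¹) := by linarith
    have h9 : 2*(C1*u^(α-1)*v*(W^K)⁻¹) ≤ 2*(C1*u^(α-1)*v*((3:ℝ)^N*(R^N)⁻¹)) := by
      have hup : (0:ℝ) < u^(α-1) := Real.rpow_pos_of_pos hu _
      have hpos : (0:ℝ) ≤ 2*(C1*u^(α-1)*v) := by positivity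
      linarith [mul_le_mul_of_nonneg_left hinv hpos]
    have h10 : 2*(C1*u^(α-1)*v*((3:ℝ)^N*(R^N)⁻¹))
        = (2*C1*(3:ℝ)^N/α)*(R^N)⁻¹*(α*u^(α-1)*v) := by
      field_simp
    have h11 : (2*C1*(3:ℝ)^N/α)*(R^N)⁻¹*(α*u^(α-1)*v)
        ≤ (2*C1*(3:ℝ)^N/α + 1)*(R^N)⁻¹*(α*u^(α-1)*v) := by
      have hpos : (0:ℝ) ≤ (R^N)⁻¹*(α*u^(α-1)*v) := by
        have hup : (0:ℝ) < u^(α-1) := Real.rpow_pos_of_pos hu _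
        positivity
      nlinarith
    rw [hRneg]
    linarith
  calc 2 * |f (u+c,v)| ≤ (2*C1*(3:ℝ)^N/α + 1) * R^(-N) * (α * u^(α-1) * v) := hfin
    _ = (2*C1*(3:ℝ)^N/α + 1) * R^(-N) * (α * u^(α-1) * v) := rfl
end

section
/- Let α > 1, c ∈ ℝ, and f ∈ 𝒮(ℝ²) with f(x+c,y) = f(-x+c,y) for all x,y and (∂^k f/∂x^k)(c,y) = 0 for k = 0,…,m where m ≥ α - 2. Define F^P(ξ,η) = 2 f(ξ^{1/α}+c,η)/(α ξ^{(α-1)/α}) for ξ > 0 and 0 otherwise. Then for fixed s, u ∈ ℝ, as ξ → 0⁻ one has F^P(ξ, sξ+u) = 0, and as ξ → 0⁺: F^P(ξ, sξ+u) → 0 if m > α - 2, while F^P(ξ, sξ+u) → (2/(m+2)!) · (∂^{m+1} f/∂x^{m+1})(c, u) if m = α - 2. -/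
open Filter Set

set_option linter.unusedVariables false

lemma myIDW {g : ℝ → ℝ} (hg : ContDiff ℝ (⊤ : ℕ∞) g) {s : Set ℝ} (hs : UniqueDiffOn ℝ s)
    {x : ℝ} (hx : x ∈ s) (n : ℕ) :
    iteratedDerivWithin n g s x = iteratedDeriv n g x := by
  have h : HasFTaylorSeriesUpToOn ((⊤ : ℕ∞) : WithTop ℕ∞) g (ftaylorSeries ℝ g) s :=
    ((contDiff_iff_ftaylorSeries.mp hg).hasFTaylorSeriesUpToOn s)
  rw [iteratedDerivWithin_eq_iteratedFDerivWithin, iteratedDeriv_eq_iteratedFDeriv,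
    ← h.eq_iteratedFDerivWithin_of_uniqueDiffOn (by exact_mod_cast le_top) hs hx]
  rfl

lemma slice_iteratedDeriv {f : ℝ × ℝ → ℝ} (hf : ContDiff ℝ (⊤ : ℕ∞) f) (n : ℕ) (x y : ℝ) :
    iteratedDeriv n (fun t : ℝ => f (t, y)) x
      = iteratedFDeriv ℝ n f (x, y) (fun _ => ((1 : ℝ), (0 : ℝ))) := by
  induction n generalizing x with
  | zero => simp
  | succ n ih =>
    rw [iteratedDeriv_succ]
    have hfun : iteratedDeriv n (fun t : ℝ => f (t, y))
        = fun x : ℝ => iteratedFDeriv ℝ n f (x, y) (fun _ => ((1 : ℝ), (0 : ℝ))) :=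
      funext fun x => ih x
    rw [hfun]
    have hj : HasFDerivAt (fun x : ℝ => ((x, y) : ℝ × ℝ))
        (ContinuousLinearMap.inl ℝ ℝ ℝ) x := by
      have h2 := (ContinuousLinearMap.inl ℝ ℝ ℝ).hasFDerivAt (x := x) |>.add_const ((0 : ℝ), y)
      refine h2.congr_of_eventuallyEq (Filter.Eventually.of_forall fun t => ?_)
      simp [Prod.ext_iff]
    have hdG : Differentiable ℝ (iteratedFDeriv ℝ n f) :=
      hf.differentiable_iteratedFDeriv (by exact_mod_cast (lt_top_iff_ne_top.mpr (by simp) : (n : ℕ∞) < ⊤))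
    have hG : HasFDerivAt (iteratedFDeriv ℝ n f)
        (fderiv ℝ (iteratedFDeriv ℝ n f) (x, y)) (x, y) := (hdG (x, y)).hasFDerivAt
    have h1 := hG.comp x hj
    have h2 := (ContinuousMultilinearMap.apply ℝ (fun _ : Fin n => ℝ × ℝ) ℝ
      (fun _ => ((1 : ℝ), (0 : ℝ)))).hasFDerivAt.comp x h1
    have h3 := h2.hasDerivAt.deriv
    rw [show (fun x : ℝ => iteratedFDeriv ℝ n f (x, y) (fun _ => ((1 : ℝ), (0 : ℝ))))
        = (ContinuousMultilinearMap.apply ℝ (fun _ : Fin n => ℝ × ℝ) ℝ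
          (fun _ => ((1 : ℝ), (0 : ℝ)))) ∘ (iteratedFDeriv ℝ n f) ∘ (fun x : ℝ => (x, y))
      from rfl, h3]
    rw [iteratedFDeriv_succ_apply_left]
    simp [ContinuousMultilinearMap.apply_apply, Fin.tail]
    rfl

lemma taylor_slice {f : ℝ × ℝ → ℝ} (hf : ContDiff ℝ (⊤ : ℕ∞) f) (c : ℝ) (m : ℕ)
    (hvan : ∀ k ≤ m, ∀ y : ℝ, iteratedDeriv k (fun x : ℝ => f (x, y)) c = 0)
    (y t : ℝ) (ht : 0 < t) :
    ∃ x' ∈ Set.Ioo c (c + t),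
      f (t + c, y) = iteratedFDeriv ℝ (m + 1) f (x', y) (fun _ => ((1 : ℝ), (0 : ℝ)))
          * t ^ (m + 1) / ((m + 1).factorial : ℝ) := by
  set g := fun x : ℝ => f (x, y) with hg_def
  have hg : ContDiff ℝ (⊤ : ℕ∞) g := hf.comp (contDiff_id.prodMk contDiff_const)
  have hlt : c < c + t := by linarith
  have hudo : UniqueDiffOn ℝ (Icc c (c + t)) := uniqueDiffOn_Icc hlt
  have hcd : ContDiffOn ℝ m g (Icc c (c + t)) := (hg.of_le (by exact_mod_cast le_top)).contDiffOn
  have hdiff : DifferentiableOn ℝ (iteratedDerivWithin m g (Icc c (c + t))) (Ioo c (c + t)) := by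
    have hd : Differentiable ℝ (iteratedDeriv m g) :=
      hg.differentiable_iteratedDeriv m (by exact_mod_cast lt_top_iff_ne_top.mpr (by simp))
    exact hd.differentiableOn.congr fun z hz => myIDW hg hudo (Ioo_subset_Icc_self hz) m
  obtain ⟨x', hx', hEq⟩ := taylor_mean_remainder_lagrange hlt.ne
    (by rwa [uIcc_of_le hlt.le]) (by rwa [uIcc_of_le hlt.le, uIoo_of_le hlt.le])
  rw [uIoo_of_le hlt.le] at hx'
  rw [uIcc_of_le hlt.le] at hEq
  refine ⟨x', hx', ?_⟩
  have htay : taylorWithinEval g m (Icc c (c + t)) c (c + t) = 0 := by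
    rw [taylor_within_apply]
    refine Finset.sum_eq_zero fun k hk => ?_
    rw [myIDW hg hudo (left_mem_Icc.mpr hlt.le) k,
      hvan k (Nat.lt_succ_iff.mp (Finset.mem_range.mp hk)) y]
    simp
  rw [htay, sub_zero] at hEq
  have hx'I : x' ∈ Icc c (c + t) := Ioo_subset_Icc_self hx'
  rw [myIDW hg hudo hx'I (m + 1), slice_iteratedDeriv hf (m + 1) x' y] at hEq
  have : g (c + t) = f (t + c, y) := by rw [hg_def]; ring_nf
  rw [← this, hEq]
  ring_nf

/-- One-sided limits of `F_α^P(ξ, sξ + u)` as `ξ → 0±`. -/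
theorem FP_limits (α c s u : ℝ) (hα : 1 < α) (m : ℕ) (hm : (m : ℝ) ≥ α - 2)
    (f : SchwartzMap (ℝ × ℝ) ℝ)
    (hsym : ∀ x y : ℝ, f (x + c, y) = f (-x + c, y))
    (hvan : ∀ k ≤ m, ∀ y : ℝ, iteratedDeriv k (fun x : ℝ => f (x, y)) c = 0)
    (F : ℝ → ℝ → ℝ)
    (hF : ∀ ξ η : ℝ,
      F ξ η = if 0 < ξ then 2 * f (ξ ^ (1 / α) + c, η) / (α * ξ ^ ((α - 1) / α)) else 0) :
    (∀ ξ : ℝ, ξ < 0 → F ξ (s * ξ + u) = 0) ∧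
    ((m : ℝ) > α - 2 →
      Tendsto (fun ξ : ℝ => F ξ (s * ξ + u)) (nhdsWithin 0 (Set.Ioi 0)) (nhds 0)) ∧
    ((m : ℝ) = α - 2 →
      Tendsto (fun ξ : ℝ => F ξ (s * ξ + u)) (nhdsWithin 0 (Set.Ioi 0))
        (nhds (2 / ((m + 2).factorial : ℝ) *
          iteratedDeriv (m + 1) (fun x : ℝ => f (x, u)) c))) := by
  have hα0 : (0 : ℝ) < α := by linarith
  have hsm : ContDiff ℝ (⊤ : ℕ∞) f := f.smooth ⊤
  set D : ℝ × ℝ → ℝ := fun q => iteratedFDeriv ℝ (m + 1) f q (fun _ => ((1 : ℝ), (0 : ℝ)))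
    with hD_def
  have hDcont : Continuous D := by
    have h1 : Continuous (iteratedFDeriv ℝ (m + 1) f) :=
      hsm.continuous_iteratedFDeriv (by exact_mod_cast le_top)
    exact (ContinuousMultilinearMap.apply ℝ (fun _ : Fin (m + 1) => ℝ × ℝ) ℝ
      (fun _ => ((1 : ℝ), (0 : ℝ)))).continuous.comp h1
  -- choice of intermediate points
  have key : ∀ ξ : ℝ, ∃ x' : ℝ, 0 < ξ → x' ∈ Set.Ioo c (c + ξ ^ (1 / α)) ∧
      F ξ (s * ξ + u) = 2 / (α * ((m + 1).factorial : ℝ))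
        * (ξ ^ (1 / α)) ^ ((m : ℝ) + 2 - α) * D (x', s * ξ + u) := by
    intro ξ
    by_cases hξ : 0 < ξ
    · have ht : 0 < ξ ^ (1 / α) := Real.rpow_pos_of_pos hξ _
      obtain ⟨x', hx', htay⟩ := taylor_slice hsm c m hvan (s * ξ + u) (ξ ^ (1 / α)) ht
      refine ⟨x', fun _ => ⟨hx', ?_⟩⟩
      set t := ξ ^ (1 / α) with ht_def
      have hden : ξ ^ ((α - 1) / α) = t ^ (α - 1) := by
        rw [ht_def, ← Real.rpow_mul hξ.le]
        congr 1
        field_simp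
      have hpow : t ^ (m + 1) = t ^ ((m : ℝ) + 2 - α) * t ^ (α - 1) := by
        rw [← Real.rpow_add ht, ← Real.rpow_natCast t (m + 1)]
        congr 1
        push_cast
        ring
      have hfact : ((m + 1).factorial : ℝ) ≠ 0 := by positivity
      have htd : t ^ (α - 1) ≠ 0 := (Real.rpow_pos_of_pos ht _).ne'
      rw [hF, if_pos hξ, hden, htay, hpow]
      field_simp
      ring
    · exact ⟨c, fun h => absurd h hξ⟩
  choose x' hx' using key
  -- limits of auxiliary functions
  have hT0 : Tendsto (fun ξ : ℝ => ξ ^ (1 / α)) (nhdsWithin 0 (Set.Ioi 0)) (nhds 0) := by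
    have hc : ContinuousAt (fun x : ℝ => x ^ (1 / α)) 0 :=
      Real.continuousAt_rpow_const 0 (1 / α) (Or.inr (by positivity))
    have := hc.tendsto.mono_left (nhdsWithin_le_nhds (s := Set.Ioi (0:ℝ)))
    rwa [Real.zero_rpow (by positivity : (1 / α) ≠ 0)] at this
  have hmem : ∀ᶠ ξ : ℝ in nhdsWithin 0 (Set.Ioi 0), 0 < ξ :=
    eventually_nhdsWithin_of_forall fun ξ hξ => hξ
  have hx'c : Tendsto (fun ξ : ℝ => x' ξ) (nhdsWithin 0 (Set.Ioi 0)) (nhds c) := by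
    have hub : Tendsto (fun ξ : ℝ => c + ξ ^ (1 / α)) (nhdsWithin 0 (Set.Ioi 0)) (nhds c) := by
      have := tendsto_const_nhds.add hT0 (f := fun _ : ℝ => c)
      simpa using this
    refine tendsto_of_tendsto_of_tendsto_of_le_of_le' tendsto_const_nhds hub ?_ ?_
    · exact hmem.mono fun ξ hξ => ((hx' ξ hξ).1.1).le
    · exact hmem.mono fun ξ hξ => ((hx' ξ hξ).1.2).le
  have hy : Tendsto (fun ξ : ℝ => s * ξ + u) (nhdsWithin 0 (Set.Ioi 0)) (nhds u) := by
    have : Tendsto (fun ξ : ℝ => s * ξ + u) (nhds 0) (nhds (s * 0 + u)) :=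
      ((continuous_const.mul continuous_id).add continuous_const).tendsto 0
    simpa using this.mono_left nhdsWithin_le_nhds
  have hD : Tendsto (fun ξ : ℝ => D (x' ξ, s * ξ + u)) (nhdsWithin 0 (Set.Ioi 0))
      (nhds (D (c, u))) :=
    (hDcont.tendsto (c, u)).comp (hx'c.prodMk_nhds hy)
  have hEq : ∀ᶠ ξ : ℝ in nhdsWithin 0 (Set.Ioi 0),
      F ξ (s * ξ + u) = 2 / (α * ((m + 1).factorial : ℝ))
        * (ξ ^ (1 / α)) ^ ((m : ℝ) + 2 - α) * D (x' ξ, s * ξ + u) :=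
    hmem.mono fun ξ hξ => (hx' ξ hξ).2
  refine ⟨?_, ?_, ?_⟩
  · intro ξ hξ
    rw [hF, if_neg (by linarith)]
  · intro hgt
    have hp : (0 : ℝ) < (m : ℝ) + 2 - α := by linarith
    have hpow0 : Tendsto (fun ξ : ℝ => (ξ ^ (1 / α)) ^ ((m : ℝ) + 2 - α))
        (nhdsWithin 0 (Set.Ioi 0)) (nhds 0) := by
      have hc : ContinuousAt (fun x : ℝ => x ^ ((m : ℝ) + 2 - α)) 0 :=
        Real.continuousAt_rpow_const 0 _ (Or.inr hp.le)
      have := hc.tendsto.comp hT0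
      rwa [Real.zero_rpow hp.ne'] at this
    have : Tendsto (fun ξ : ℝ => 2 / (α * ((m + 1).factorial : ℝ))
        * (ξ ^ (1 / α)) ^ ((m : ℝ) + 2 - α) * D (x' ξ, s * ξ + u))
        (nhdsWithin 0 (Set.Ioi 0)) (nhds (2 / (α * ((m + 1).factorial : ℝ)) * 0 * D (c, u))) :=
      (tendsto_const_nhds.mul hpow0).mul hD
    rw [mul_zero, zero_mul] at this
    exact Tendsto.congr' (by filter_upwards [hEq] with ξ h; exact h.symm) this
  · intro heq
    have hαm : α = (m : ℝ) + 2 := by linarith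
    have hz : (m : ℝ) + 2 - α = 0 := by linarith
    have hlim : Tendsto (fun ξ : ℝ => 2 / (α * ((m + 1).factorial : ℝ))
        * (ξ ^ (1 / α)) ^ ((m : ℝ) + 2 - α) * D (x' ξ, s * ξ + u))
        (nhdsWithin 0 (Set.Ioi 0))
        (nhds (2 / (α * ((m + 1).factorial : ℝ)) * D (c, u))) := by
      simp only [hz, Real.rpow_zero, mul_one]
      exact tendsto_const_nhds.mul hD
    have hval : 2 / (α * ((m + 1).factorial : ℝ)) * D (c, u)
        = 2 / ((m + 2).factorial : ℝ) * iteratedDeriv (m + 1) (fun x : ℝ => f (x, u)) c := by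
      rw [slice_iteratedDeriv hsm (m + 1) c u, hαm]
      have : ((m + 2).factorial : ℝ) = ((m : ℝ) + 2) * ((m + 1).factorial : ℝ) := by
        rw [show m + 2 = (m + 1) + 1 from rfl, Nat.factorial_succ]
        push_cast
        ring
      rw [this]
    rw [← hval]
    exact Tendsto.congr' (by filter_upwards [hEq] with ξ h; exact h.symm) hlim
end
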